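/- If A and B are positive semidefinite complex q×q matrices, then the parallel sum A : B := A(A+B)^†B is positive semidefinite, where (A+B)^† denotes the Moore-Penrose inverse of A+B. -/

import Mathlib

open Matrix ComplexOrder
open scoped Classical

/-- Moore-Penrose inverse of a complex matrix. -/
noncomputable def mp {m n : Type*} [Fintype m] [Fintype n] (A : Matrix m n ℂ) : Matrix n m ℂ :=
  if h : ∃ X : Matrix n m ℂ,
      A * X * A = A ∧ X * A * X = X ∧ (A * X)ᴴ = A * X ∧ (X * A)ᴴ = X * A
  then h.choose else 0

section Aux

variable {n : Type*} [Fintype n] [DecidableEq n]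

/-- Uniqueness of the Moore-Penrose inverse. -/
lemma penrose_unique {A X Y : Matrix n n ℂ}
    (hX : A * X * A = A ∧ X * A * X = X ∧ (A * X)ᴴ = A * X ∧ (X * A)ᴴ = X * A)
    (hY : A * Y * A = A ∧ Y * A * Y = Y ∧ (A * Y)ᴴ = A * Y ∧ (Y * A)ᴴ = Y * A) :
    X = Y := by
  obtain ⟨hX1, hX2, hX3, hX4⟩ := hX
  obtain ⟨hY1, hY2, hY3, hY4⟩ := hY
  have hAX : A * X = A * Y := by
    calc A * X = (A * X)ᴴ := hX3.symm
    _ = Xᴴ * Aᴴ := by rw [conjTranspose_mul]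
    _ = Xᴴ * (A * Y * A)ᴴ := by rw [hY1]
    _ = Xᴴ * (Aᴴ * (A*Y)ᴴ) := by rw [conjTranspose_mul]
    _ = (A * X)ᴴ * (A * Y)ᴴ := by rw [conjTranspose_mul]; simp only [conjTranspose_mul, Matrix.mul_assoc, Matrix.mul_one, Matrix.one_mul]
    _ = (A * X) * (A * Y) := by rw [hX3, hY3]
    _ = (A * X * A) * Y := by simp only [conjTranspose_mul, Matrix.mul_assoc, Matrix.mul_one, Matrix.one_mul]
    _ = A * Y := by rw [hX1]
  have hXA : X * A = Y * A := by
    calc X * A = (X * A)ᴴ := hX4.symm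
    _ = Aᴴ * Xᴴ := by rw [conjTranspose_mul]
    _ = (A * Y * A)ᴴ * Xᴴ := by rw [hY1]
    _ = ((Y*A)ᴴ * Aᴴ) * Xᴴ := by rw [conjTranspose_mul, conjTranspose_mul]; simp only [conjTranspose_mul, Matrix.mul_assoc, Matrix.mul_one, Matrix.one_mul]
    _ = (Y * A)ᴴ * (X * A)ᴴ := by rw [conjTranspose_mul]; simp only [conjTranspose_mul, Matrix.mul_assoc, Matrix.mul_one, Matrix.one_mul]
    _ = (Y * A) * (X * A) := by rw [hX4, hY4]
    _ = Y * (A * X * A) := by simp only [conjTranspose_mul, Matrix.mul_assoc, Matrix.mul_one, Matrix.one_mul]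
    _ = Y * A := by rw [hX1]
  calc X = X * A * X := hX2.symm
  _ = Y * A * X := by rw [hXA]
  _ = Y * (A * X) := by simp only [conjTranspose_mul, Matrix.mul_assoc, Matrix.mul_one, Matrix.one_mul]
  _ = Y * (A * Y) := by rw [hAX]
  _ = Y := by rw [← mul_assoc, hY2]

/-- Existence of the Moore-Penrose inverse for a Hermitian matrix. -/
lemma exists_penrose_of_isHermitian {S : Matrix n n ℂ} (hS : S.IsHermitian) :
    ∃ X : Matrix n n ℂ,
      S * X * S = S ∧ X * S * X = X ∧ (S * X)ᴴ = S * X ∧ (X * S)ᴴ = X * S := by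
  set U : Matrix n n ℂ := (hS.eigenvectorUnitary : Matrix n n ℂ) with hU
  have hU2 : star U * U = 1 := mem_unitaryGroup_iff'.mp hS.eigenvectorUnitary.2
  set d : n → ℂ := RCLike.ofReal ∘ hS.eigenvalues with hd
  set e : n → ℂ := fun i => (d i)⁻¹ with he
  have hspec : S = U * diagonal d * star U := hS.spectral_theorem
  have hmul : ∀ f g : n → ℂ,
      (U * diagonal f * star U) * (U * diagonal g * star U)
        = U * diagonal (fun i => f i * g i) * star U := by
    intro f g
    have h1 : (U * diagonal f * star U) * (U * diagonal g * star U)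
        = U * diagonal f * (star U * U) * diagonal g * star U := by
      simp only [Matrix.mul_assoc]
    rw [h1, hU2, Matrix.mul_one, Matrix.mul_assoc, Matrix.mul_assoc,
      ← Matrix.mul_assoc (diagonal f), diagonal_mul_diagonal]
    simp only [Matrix.mul_assoc]
  have hherm : ∀ f : n → ℂ, (∀ i, star (f i) = f i) →
      (U * diagonal f * star U)ᴴ = U * diagonal f * star U := by
    intro f hf
    have hfs : star f = f := funext hf
    calc (U * diagonal f * star U)ᴴ = (star U)ᴴ * (diagonal f)ᴴ * Uᴴ := by
          simp only [conjTranspose_mul, Matrix.mul_assoc]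
      _ = U * diagonal (star f) * star U := by
          rw [diagonal_conjTranspose]
          simp [Matrix.star_eq_conjTranspose]
      _ = U * diagonal f * star U := by rw [hfs]
  have hdreal : ∀ i, star (d i) = d i := fun i => by
    simp [hd, Complex.conj_ofReal]
  have hded : (fun i => d i * e i * d i) = d := by
    funext i
    by_cases h : d i = 0 <;> simp [he, h]
  have hede : (fun i => e i * d i * e i) = e := by
    funext i
    by_cases h : d i = 0 <;> simp [he, h]
  have hmul3 : ∀ f g h : n → ℂ,
      (U * diagonal f * star U) * (U * diagonal g * star U) * (U * diagonal h * star U)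
        = U * diagonal (fun i => f i * g i * h i) * star U := by
    intro f g h
    rw [hmul, hmul]
  refine ⟨U * diagonal e * star U, ?_, ?_, ?_, ?_⟩
  · rw [hspec, hmul3, hded]
  · conv_lhs => rw [hspec]
    rw [hmul3, hede]
  · rw [hspec, hmul]
    refine hherm _ fun i => ?_
    rw [star_mul']
    rw [show star (e i) = e i by simp only [he]; rw [star_inv₀, hdreal i], hdreal i]
  · rw [hspec, hmul]
    refine hherm _ fun i => ?_
    rw [star_mul']
    rw [show star (e i) = e i by simp only [he]; rw [star_inv₀, hdreal i], hdreal i]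
lemma mp_spec {S : Matrix n n ℂ} (hS : S.IsHermitian) :
    S * mp S * S = S ∧ mp S * S * mp S = mp S ∧
      (S * mp S)ᴴ = S * mp S ∧ (mp S * S)ᴴ = mp S * S := by
  have h := exists_penrose_of_isHermitian hS
  rw [mp, dif_pos h]
  exact h.choose_spec

/-- The Moore-Penrose inverse of a Hermitian matrix is Hermitian. -/
lemma mp_isHermitian {S : Matrix n n ℂ} (hS : S.IsHermitian) :
    (mp S)ᴴ = mp S := by
  obtain ⟨h1, h2, h3, h4⟩ := mp_spec hS
  have key : S * (mp S)ᴴ * S = S ∧ (mp S)ᴴ * S * (mp S)ᴴ = (mp S)ᴴ ∧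
      (S * (mp S)ᴴ)ᴴ = S * (mp S)ᴴ ∧ ((mp S)ᴴ * S)ᴴ = (mp S)ᴴ * S := by
    refine ⟨?_, ?_, ?_, ?_⟩
    · calc S * (mp S)ᴴ * S = (Sᴴ * mp S * Sᴴ)ᴴ := by
            simp [conjTranspose_mul, Matrix.mul_assoc]
        _ = (S * mp S * S)ᴴ := by rw [hS.eq]
        _ = Sᴴ := by rw [h1]
        _ = S := hS.eq
    · calc (mp S)ᴴ * S * (mp S)ᴴ = (mp S * Sᴴ * mp S)ᴴ := by
            simp [conjTranspose_mul, Matrix.mul_assoc]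
        _ = (mp S * S * mp S)ᴴ := by rw [hS.eq]
        _ = (mp S)ᴴ := by rw [h2]
    · calc (S * (mp S)ᴴ)ᴴ = mp S * Sᴴ := by rw [conjTranspose_mul, conjTranspose_conjTranspose]
        _ = mp S * S := by rw [hS.eq]
        _ = (mp S * S)ᴴ := h4.symm
        _ = Sᴴ * (mp S)ᴴ := by rw [conjTranspose_mul]
        _ = S * (mp S)ᴴ := by rw [hS.eq]
    · calc ((mp S)ᴴ * S)ᴴ = Sᴴ * mp S := by rw [conjTranspose_mul, conjTranspose_conjTranspose]
        _ = S * mp S := by rw [hS.eq]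
        _ = (S * mp S)ᴴ := h3.symm
        _ = (mp S)ᴴ * Sᴴ := by rw [conjTranspose_mul]
        _ = (mp S)ᴴ * S := by rw [hS.eq]
  exact penrose_unique key ⟨h1, h2, h3, h4⟩



lemma quad_conj (K M : Matrix n n ℂ) (x : n → ℂ) :
    star x ⬝ᵥ ((Kᴴ * M * K) *ᵥ x) = star (K *ᵥ x) ⬝ᵥ (M *ᵥ (K *ᵥ x)) := by
  simp only [star_mulVec, dotProduct_mulVec, vecMul_vecMul, Matrix.mul_assoc]

/-- A matrix whose quadratic form vanishes against a PSD "dominating" structure. -/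
lemma mul_eq_zero_of_quadzero {C P : Matrix n n ℂ} (hC : C.PosSemidef)
    (h : ∀ x, star x ⬝ᵥ ((Pᴴ * C * P) *ᵥ x) = 0) : C * P = 0 := by
  have h' : ∀ x, C *ᵥ (P *ᵥ x) = 0 := by
    intro x
    have := (hC.dotProduct_mulVec_zero_iff (P *ᵥ x)).mp (by rw [← quad_conj]; exact h x)
    exact this
  ext i j
  have := congrFun (h' (Pi.single j 1)) i
  rw [mulVec_mulVec] at this
  simpa [mulVec_single] using this

/-- Range-inclusion identity: if `C` and `S - C` are PSD then `C * S† * S = C`. -/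
lemma mul_mp_mul_self {S C : Matrix n n ℂ} (hC : C.PosSemidef) (hSC : (S - C).PosSemidef)
    (hS : S.IsHermitian) : C * mp S * S = C := by
  obtain ⟨e1, e2, e3, e4⟩ := mp_spec hS
  set Q : Matrix n n ℂ := 1 - mp S * S with hQ
  have hQH : Qᴴ = Q := by rw [hQ, conjTranspose_sub, conjTranspose_one, e4]
  have hSQ : S * Q = 0 := by
    rw [hQ, Matrix.mul_sub, Matrix.mul_one, ← Matrix.mul_assoc, e1, sub_self]
  have hsum : Qᴴ * C * Q + Qᴴ * (S - C) * Q = 0 := by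
    have : Qᴴ * C * Q + Qᴴ * (S - C) * Q = Qᴴ * (S * Q) := by
      rw [Matrix.mul_assoc, Matrix.mul_assoc, ← Matrix.mul_add, ← Matrix.add_mul,
        add_sub_cancel]
    rw [this, hSQ, Matrix.mul_zero]
  have hq : ∀ x, star x ⬝ᵥ ((Qᴴ * C * Q) *ᵥ x) = 0 := by
    intro x
    have h1 : 0 ≤ star x ⬝ᵥ ((Qᴴ * C * Q) *ᵥ x) := (hC.conjTranspose_mul_mul_same Q).dotProduct_mulVec_nonneg x
    have h2 : 0 ≤ star x ⬝ᵥ ((Qᴴ * (S - C) * Q) *ᵥ x) := (hSC.conjTranspose_mul_mul_same Q).dotProduct_mulVec_nonneg x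
    have h3 : star x ⬝ᵥ ((Qᴴ * C * Q) *ᵥ x) + star x ⬝ᵥ ((Qᴴ * (S - C) * Q) *ᵥ x) = 0 := by
      rw [← dotProduct_add, ← add_mulVec, hsum, zero_mulVec, dotProduct_zero]
    have : star x ⬝ᵥ ((Qᴴ * C * Q) *ᵥ x) ≤ 0 := by
      rw [← h3]; simpa using h2
    exact le_antisymm this h1
  have hCQ : C * Q = 0 := mul_eq_zero_of_quadzero hC hq
  rw [hQ, Matrix.mul_sub, Matrix.mul_one] at hCQ
  have := sub_eq_zero.mp hCQ
  rw [← Matrix.mul_assoc] at this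
  exact this.symm

end Aux

/-- the parallel sum `A : B = A (A+B)† B` of positive semidefinite matrices is
positive semidefinite. -/
theorem stmt_2 (q : ℕ) (A B : Matrix (Fin q) (Fin q) ℂ)
    (hA : A.PosSemidef) (hB : B.PosSemidef) :
    (A * mp (A + B) * B).PosSemidef := by
  set S : Matrix (Fin q) (Fin q) ℂ := A + B with hSdef
  have hS : S.PosSemidef := hA.add hB
  have hSH : S.IsHermitian := hS.isHermitian
  obtain ⟨e1, e2, e3, e4⟩ := mp_spec hSH
  have hmpH : (mp S)ᴴ = mp S := mp_isHermitian hSH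
  have hSA : (S - A).PosSemidef := by
    have : S - A = B := by rw [hSdef]; abel
    rw [this]; exact hB
  have hproj2 : A * mp S * S = A := mul_mp_mul_self hA hSA hSH
  have hproj1 : S * mp S * A = A := by
    have := congrArg conjTranspose hproj2
    rwa [conjTranspose_mul, conjTranspose_mul, hmpH, hA.1.eq, hSH.eq,
      ← Matrix.mul_assoc] at this
  have hB' : B = S - A := by rw [hSdef]; abel
  have hMA : A * mp S * B = A - A * mp S * A := by
    rw [hB', Matrix.mul_sub, hproj2]
  rw [hMA]
  rw [posSemidef_iff_dotProduct_mulVec]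
  constructor
  · show (A - A * mp S * A)ᴴ = A - A * mp S * A
    rw [conjTranspose_sub, conjTranspose_mul, conjTranspose_mul, hmpH, hA.1.eq]
    rw [Matrix.mul_assoc]
  · intro x
    set u : Fin q → ℂ := (mp S * A) *ᵥ x with hu
    have hSu : S *ᵥ u = A *ᵥ x := by
      rw [hu, mulVec_mulVec, ← Matrix.mul_assoc, hproj1]
    set a : ℂ := star x ⬝ᵥ (A *ᵥ x) with ha
    set t : ℂ := star u ⬝ᵥ (S *ᵥ u) with hts
    have hquad : star x ⬝ᵥ ((A * mp S * A) *ᵥ x) = t := by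
      have hfac : A * mp S * A = (mp S * A)ᴴ * S * (mp S * A) := by
        rw [conjTranspose_mul, hmpH, hA.1.eq]
        calc A * mp S * A = A * (mp S * S * mp S) * A := by rw [e2]
          _ = A * mp S * S * (mp S * A) := by simp only [Matrix.mul_assoc]
      rw [hfac, quad_conj, ← hu, ← hts]
    have hα : 0 ≤ star u ⬝ᵥ (A *ᵥ u) := hA.dotProduct_mulVec_nonneg u
    have hβ : 0 ≤ star u ⬝ᵥ (B *ᵥ u) := hB.dotProduct_mulVec_nonneg u
    have ht : t = star u ⬝ᵥ (A *ᵥ u) + star u ⬝ᵥ (B *ᵥ u) := by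
      rw [hts, hSdef, add_mulVec, dotProduct_add]
    have htreal : star t = t := IsSelfAdjoint.of_nonneg (hS.dotProduct_mulVec_nonneg u)
    have hcross : star u ⬝ᵥ (A *ᵥ x) = t := by rw [← hSu, hts]
    have hcross' : star x ⬝ᵥ (A *ᵥ u) = t := by
      calc star x ⬝ᵥ (A *ᵥ u) = star (star (A *ᵥ u) ⬝ᵥ x) := star_dotProduct _ _
        _ = star ((star u ᵥ* Aᴴ) ⬝ᵥ x) := by rw [star_mulVec]
        _ = star (star u ⬝ᵥ (Aᴴ *ᵥ x)) := by rw [dotProduct_mulVec]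
        _ = star (star u ⬝ᵥ (A *ᵥ x)) := by rw [hA.1.eq]
        _ = t := by rw [hcross, htreal]
    have hexp : 0 ≤ a - t - t + star u ⬝ᵥ (A *ᵥ u) := by
      have h0 := hA.dotProduct_mulVec_nonneg (x - u)
      have expand : star (x - u) ⬝ᵥ (A *ᵥ (x - u)) = a - t - t + star u ⬝ᵥ (A *ᵥ u) := by
        simp only [mulVec_sub, star_sub, sub_dotProduct, dotProduct_sub]
        rw [hcross, hcross', ← ha]
        ring
      rwa [expand] at h0
    have hgoal : star x ⬝ᵥ ((A - A * mp S * A) *ᵥ x) = a - t := by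
      rw [sub_mulVec, dotProduct_sub, hquad, ← ha]
    rw [hgoal]
    have hsplit : a - t = (a - t - t + star u ⬝ᵥ (A *ᵥ u)) + star u ⬝ᵥ (B *ᵥ u) := by
      linear_combination ht
    rw [hsplit]
    exact add_nonneg hexp hβ
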